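/- Let T be a trigonometric polynomial on ℝ of degree at most M. Then for every integer s ≥ 0, ‖T^{(s)}‖_∞ ≤ M^s ‖T‖_∞, where T^{(s)} denotes the s-th derivative and ‖·‖_∞ the supremum norm. -/

import Mathlib

open Finset Real

/-- `f` is a trigonometric polynomial of degree at most `M`. -/
def IsTrigPoly (M : ℕ) (f : ℝ → ℝ) : Prop :=
  ∃ a b : ℕ → ℝ, f = fun x =>
    ∑ j ∈ Finset.range (M + 1), (a j * Real.cos (j * x) + b j * Real.sin (j * x))

noncomputable def node (M k : ℕ) : ℝ := (2 * k + 1) * Real.pi / (2 * M)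

noncomputable def lam (M k : ℕ) : ℝ :=
  Real.sin (M * node M k) / (2 * M * (1 - Real.cos (node M k)))

lemma cos_node_ne_one {M k : ℕ} (hM : 1 ≤ M) : Real.cos (node M k) ≠ 1 := by
  intro h
  rw [Real.cos_eq_one_iff] at h
  obtain ⟨n, hn⟩ := h
  rw [node] at hn
  have hMpos : (0:ℝ) < 2 * M := by positivity
  have hpi := Real.pi_ne_zero
  have h2 : (n:ℝ) * (2 * Real.pi) * (2 * M) = (2 * k + 1) * Real.pi := by
    field_simp at hn ⊢; linarith [hn]
  have h3 : ((4 * n * M : ℤ) : ℝ) * Real.pi = ((2 * k + 1 : ℤ) : ℝ) * Real.pi := by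
    push_cast; linear_combination h2
  have h4 : (4 * n * M : ℤ) = (2 * k + 1 : ℤ) := by
    exact_mod_cast mul_right_cancel₀ hpi h3
  have h5 : (2:ℤ) ∣ 4 * n * M := ⟨2 * n * M, by ring⟩
  rw [h4] at h5
  omega

lemma one_sub_cos_node_pos {M k : ℕ} (hM : 1 ≤ M) : 0 < 1 - Real.cos (node M k) := by
  have h1 := Real.cos_le_one (node M k)
  have h2 := cos_node_ne_one (k := k) hM
  cases lt_or_eq_of_le h1 with
  | inl h => linarith
  | inr h => exact absurd h h2

lemma cos_M_node {M k : ℕ} (hM : 1 ≤ M) : Real.cos (M * node M k) = 0 := by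
  have hM0 : (M:ℝ) ≠ 0 := by positivity
  have : (M:ℝ) * node M k = k * Real.pi + Real.pi / 2 := by
    rw [node]; field_simp
  rw [this, Real.cos_add, Real.cos_pi_div_two, Real.sin_pi_div_two,
    Real.sin_nat_mul_pi]
  ring

lemma sin_M_node_sq {M k : ℕ} (hM : 1 ≤ M) : Real.sin (M * node M k) ^ 2 = 1 := by
  have := Real.sin_sq_add_cos_sq ((M:ℝ) * node M k)
  rw [cos_M_node hM] at this; nlinarith

lemma abs_sin_M_node {M k : ℕ} (hM : 1 ≤ M) : |Real.sin (M * node M k)| = 1 := by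
  have h := sin_M_node_sq (k := k) hM
  nlinarith [abs_nonneg (Real.sin (M * node M k)), sq_abs (Real.sin (M * node M k))]

lemma cos_rec (θ : ℝ) (n : ℕ) :
    Real.cos (((n:ℝ) + 2) * θ) = 2 * Real.cos θ * Real.cos (((n:ℝ) + 1) * θ) - Real.cos ((n:ℝ) * θ) := by
  have e1 : ((n:ℝ) + 2) * θ = ((n:ℝ) + 1) * θ + θ := by ring
  have e2 : (n:ℝ) * θ = ((n:ℝ) + 1) * θ - θ := by ring
  rw [e1, e2, Real.cos_add, Real.cos_sub]; ring

lemma dirichlet (θ : ℝ) (m : ℕ) :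
    Real.cos ((m:ℝ) * θ) - Real.cos (((m:ℝ) + 1) * θ) =
      (1 - Real.cos θ) * (1 + 2 * ∑ l ∈ Finset.range m, Real.cos (((l:ℝ) + 1) * θ)) := by
  induction m with
  | zero => simp
  | succ m ih =>
    rw [Finset.sum_range_succ]
    push_cast
    have hc := cos_rec θ m
    push_cast at ih
    have e : ((m:ℝ) + 1 + 1) * θ = ((m:ℝ) + 2) * θ := by ring
    rw [e]
    linear_combination ih - hc

lemma telescope (f : ℕ → ℝ) (a b : ℕ) (h : a ≤ b) :
    ∑ m ∈ Finset.Ico a b, (f m - f (m + 1)) = f a - f b := by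
  induction b, h using Nat.le_induction with
  | base => simp
  | succ b hb ih => rw [Finset.sum_Ico_succ_top (by omega), ih]; ring

lemma sum_cos_node {M l : ℕ} (hM : 1 ≤ M) (hl1 : 1 ≤ l) (hl2 : l < 2 * M) :
    ∑ k ∈ Finset.range (2 * M), Real.cos ((l:ℝ) * node M k) = 0 := by
  have hM0 : (M:ℝ) ≠ 0 := by positivity
  set z : ℂ := Complex.exp ((l * Real.pi / M : ℝ) * Complex.I) with hz
  set w : ℂ := Complex.exp ((l * Real.pi / (2 * M) : ℝ) * Complex.I) with hw
  have hM0c : (M:ℂ) ≠ 0 := by exact_mod_cast hM0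
  have hzne : z ≠ 1 := by
    rw [hz]
    intro hone
    rw [Complex.exp_eq_one_iff] at hone
    obtain ⟨n, hn⟩ := hone
    have h' : ((l * Real.pi / M : ℝ) : ℂ) * Complex.I = ((n : ℂ) * (2 * (Real.pi:ℂ))) * Complex.I := by
      rw [hn]; push_cast; ring
    have hI : ((l * Real.pi / M : ℝ) : ℂ) = (n : ℂ) * (2 * (Real.pi:ℂ)) :=
      mul_right_cancel₀ Complex.I_ne_zero h'
    have hr : (l * Real.pi / M : ℝ) = (n : ℝ) * (2 * Real.pi) := by exact_mod_cast hI
    have h2 : ((l:ℤ) : ℝ) * Real.pi = ((2 * n * M : ℤ) : ℝ) * Real.pi := by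
      push_cast
      field_simp at hr
      rw [hr]; ring
    have h3 : (l : ℤ) = 2 * n * M := by exact_mod_cast mul_right_cancel₀ Real.pi_ne_zero h2
    rcases le_or_gt n 0 with h | h
    · nlinarith [h3, (by exact_mod_cast hl1 : (1:ℤ) ≤ (l:ℤ)), (by exact_mod_cast hM : (1:ℤ) ≤ (M:ℤ))]
    · nlinarith [h3, (by exact_mod_cast hl2 : (l:ℤ) < 2 * (M:ℤ)), (by exact_mod_cast hM : (1:ℤ) ≤ (M:ℤ))]
  have hzpow : z ^ (2 * M) = 1 := by
    rw [hz, ← Complex.exp_nat_mul]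
    have : (2 * M : ℕ) * (((l * Real.pi / M : ℝ)) * Complex.I) = (l : ℂ) * (2 * Real.pi * Complex.I) := by
      push_cast
      field_simp [hM0c]
    rw [this]
    exact_mod_cast Complex.exp_int_mul_two_pi_mul_I l
  have hsum : ∑ k ∈ Finset.range (2 * M), Complex.exp (((l:ℝ) * node M k : ℝ) * Complex.I) = 0 := by
    have hterm : ∀ k, Complex.exp (((l:ℝ) * node M k : ℝ) * Complex.I) = w * z ^ k := by
      intro k
      rw [hw, hz, ← Complex.exp_nat_mul, ← Complex.exp_add]
      congr 1
      push_cast [node]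
      field_simp [hM0c]
      ring
    simp only [hterm]
    rw [← Finset.mul_sum, geom_sum_eq hzne, hzpow]
    simp
  calc ∑ k ∈ Finset.range (2 * M), Real.cos ((l:ℝ) * node M k)
      = (∑ k ∈ Finset.range (2 * M), Complex.exp (((l:ℝ) * node M k : ℝ) * Complex.I)).re := by
        rw [Complex.re_sum]
        exact Finset.sum_congr rfl fun k _ => (Complex.exp_ofReal_mul_I_re _).symm
    _ = 0 := by rw [hsum]; rfl

lemma sum_lam_sin {M j : ℕ} (hM : 1 ≤ M) (hj : j ≤ M) :
    ∑ k ∈ Finset.range (2 * M), lam M k * Real.sin ((j:ℝ) * node M k) = j := by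
  have hM0 : (M:ℝ) ≠ 0 := by positivity
  set g : ℕ → ℕ → ℝ := fun k m => 1 + 2 * ∑ l ∈ Finset.range m, Real.cos (((l:ℝ) + 1) * node M k)
    with hg
  have hterm : ∀ k ∈ Finset.range (2 * M),
      lam M k * Real.sin ((j:ℝ) * node M k)
        = (∑ m ∈ Finset.Ico (M - j) (M + j), g k m) / (4 * M) := by
    intro k _
    have hpos := one_sub_cos_node_pos (k := k) hM
    set θ := node M k with hθ
    have h1 : Real.sin ((M:ℝ) * θ) * Real.sin ((j:ℝ) * θ)
        = (Real.cos (((M - j : ℕ):ℝ) * θ) - Real.cos (((M + j : ℕ):ℝ) * θ)) / 2 := by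
      rw [Real.cos_sub_cos, Nat.cast_sub hj]
      push_cast
      have e1 : (((M:ℝ) - j) * θ + ((M:ℝ) + j) * θ) / 2 = (M:ℝ) * θ := by ring
      have e2 : (((M:ℝ) - j) * θ - ((M:ℝ) + j) * θ) / 2 = -((j:ℝ) * θ) := by ring
      rw [e1, e2, Real.sin_neg]; ring
    have h2 : Real.cos (((M - j : ℕ):ℝ) * θ) - Real.cos (((M + j : ℕ):ℝ) * θ)
        = ∑ m ∈ Finset.Ico (M - j) (M + j),
            (Real.cos ((m:ℝ) * θ) - Real.cos (((m + 1 : ℕ):ℝ) * θ)) :=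
      (telescope (fun m => Real.cos ((m:ℝ) * θ)) (M - j) (M + j) (by omega)).symm
    have h3 : ∀ m : ℕ, Real.cos ((m:ℝ) * θ) - Real.cos (((m + 1 : ℕ):ℝ) * θ)
        = (1 - Real.cos θ) * g k m := by
      intro m
      have := dirichlet θ m
      push_cast
      push_cast at this
      exact this
    have h4 : Real.sin ((M:ℝ) * θ) * Real.sin ((j:ℝ) * θ)
        = (1 - Real.cos θ) * (∑ m ∈ Finset.Ico (M - j) (M + j), g k m) / 2 := by
      rw [h1, h2, Finset.sum_congr rfl fun m _ => h3 m, ← Finset.mul_sum]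
    rw [lam, ← hθ]
    have hden : (2:ℝ) * M * (1 - Real.cos θ) ≠ 0 := by positivity
    field_simp
    rw [mul_comm θ (j:ℝ)]
    linear_combination 4 * h4
  rw [Finset.sum_congr rfl hterm, ← Finset.sum_div]
  rw [Finset.sum_comm]
  have h5 : ∀ m ∈ Finset.Ico (M - j) (M + j),
      ∑ k ∈ Finset.range (2 * M), g k m = 2 * M := by
    intro m hm
    rw [Finset.mem_Ico] at hm
    have hsum0 : ∀ l ∈ Finset.range m,
        ∑ k ∈ Finset.range (2 * M), Real.cos (((l:ℝ) + 1) * node M k) = 0 := by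
      intro l hl
      rw [Finset.mem_range] at hl
      have : ((l:ℝ) + 1) = ((l + 1 : ℕ):ℝ) := by push_cast; ring
      simp only [this]
      exact sum_cos_node hM (by omega) (by omega)
    rw [hg]
    simp only
    rw [Finset.sum_add_distrib, Finset.sum_const, Finset.card_range]
    rw [← Finset.mul_sum, Finset.sum_comm, Finset.sum_congr rfl hsum0]
    simp
  rw [Finset.sum_congr rfl h5, Finset.sum_const, Nat.card_Ico]
  have hcard : M + j - (M - j) = 2 * j := by omega
  rw [hcard]
  push_cast
  field_simp
  ring

lemma node_reflect {M k : ℕ} (hM : 1 ≤ M) (hk : k < 2 * M) :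
    node M (2 * M - 1 - k) = 2 * Real.pi - node M k := by
  have hM0 : (2:ℝ) * M ≠ 0 := by positivity
  rw [node, node]
  have h1 : (2 * M - 1 - k : ℕ) = 2 * M - (k + 1) := by omega
  rw [h1, Nat.cast_sub (by omega : k + 1 ≤ 2 * M)]
  push_cast
  field_simp
  ring

lemma lam_reflect {M k : ℕ} (hM : 1 ≤ M) (hk : k < 2 * M) :
    lam M (2 * M - 1 - k) = -lam M k := by
  rw [lam, lam, node_reflect hM hk]
  have hsin : Real.sin ((M:ℝ) * (2 * Real.pi - node M k)) = -Real.sin ((M:ℝ) * node M k) := by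
    have e : (M:ℝ) * (2 * Real.pi - node M k) = ((M:ℕ):ℝ) * (2 * Real.pi) - (M:ℝ) * node M k := by
      push_cast; ring
    rw [e, Real.sin_sub, Real.cos_nat_mul_two_pi]
    have e2 : ((M:ℕ):ℝ) * (2 * Real.pi) = ((2 * M : ℕ):ℝ) * Real.pi := by push_cast; ring
    rw [e2, Real.sin_nat_mul_pi]
    ring
  have hcos : Real.cos (2 * Real.pi - node M k) = Real.cos (node M k) := by
    rw [Real.cos_sub, Real.cos_two_pi, Real.sin_two_pi]
    ring
  rw [hsin, hcos]
  ring

lemma sum_lam_cos {M : ℕ} (j : ℕ) (hM : 1 ≤ M) :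
    ∑ k ∈ Finset.range (2 * M), lam M k * Real.cos ((j:ℝ) * node M k) = 0 := by
  set f : ℕ → ℝ := fun k => lam M k * Real.cos ((j:ℝ) * node M k) with hf
  have hrefl := Finset.sum_range_reflect f (2 * M)
  have hneg : ∀ k ∈ Finset.range (2 * M), f (2 * M - 1 - k) = -f k := by
    intro k hk
    rw [Finset.mem_range] at hk
    rw [hf]
    simp only
    rw [lam_reflect hM hk, node_reflect hM hk]
    have hcos : Real.cos ((j:ℝ) * (2 * Real.pi - node M k)) = Real.cos ((j:ℝ) * node M k) := by
      have e : (j:ℝ) * (2 * Real.pi - node M k) = ((j:ℕ):ℝ) * (2 * Real.pi) - (j:ℝ) * node M k := by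
        push_cast; ring
      rw [e, Real.cos_nat_mul_two_pi_sub]
    rw [hcos]
    ring
  rw [Finset.sum_congr rfl hneg, Finset.sum_neg_distrib] at hrefl
  linarith [hrefl]

lemma hasDerivAt_trigPoly (a b : ℕ → ℝ) (M : ℕ) (x : ℝ) :
    HasDerivAt (fun x => ∑ j ∈ Finset.range (M + 1), (a j * Real.cos (j * x) + b j * Real.sin (j * x)))
      (∑ j ∈ Finset.range (M + 1), ((j * b j) * Real.cos (j * x) + (-(j * a j)) * Real.sin (j * x))) x := by
  apply HasDerivAt.fun_sum
  intro j _
  have hc : HasDerivAt (fun x : ℝ => Real.cos ((j:ℝ) * x)) (-Real.sin ((j:ℝ) * x) * j) x := by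
    simpa [Function.comp_def] using (Real.hasDerivAt_cos ((j:ℝ) * x)).comp x ((hasDerivAt_id x).const_mul (j:ℝ))
  have hs : HasDerivAt (fun x : ℝ => Real.sin ((j:ℝ) * x)) (Real.cos ((j:ℝ) * x) * j) x := by
    simpa [Function.comp_def] using (Real.hasDerivAt_sin ((j:ℝ) * x)).comp x ((hasDerivAt_id x).const_mul (j:ℝ))
  have h := (hc.const_mul (a j)).fun_add (hs.const_mul (b j))
  convert h using 1
  ring

lemma isTrigPoly_deriv {M : ℕ} {T : ℝ → ℝ} (hT : IsTrigPoly M T) : IsTrigPoly M (deriv T) := by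
  obtain ⟨a, b, rfl⟩ := hT
  exact ⟨fun j => j * b j, fun j => -(j * a j),
    funext fun x => (hasDerivAt_trigPoly a b M x).deriv⟩

lemma trigPoly_bddAbove {M : ℕ} {T : ℝ → ℝ} (hT : IsTrigPoly M T) :
    BddAbove (Set.range fun y => |T y|) := by
  obtain ⟨a, b, rfl⟩ := hT
  refine ⟨∑ j ∈ Finset.range (M + 1), (|a j| + |b j|), ?_⟩
  rintro r ⟨y, rfl⟩
  calc |∑ j ∈ Finset.range (M + 1), (a j * Real.cos (j * y) + b j * Real.sin (j * y))|
      ≤ ∑ j ∈ Finset.range (M + 1), |a j * Real.cos (j * y) + b j * Real.sin (j * y)| :=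
        Finset.abs_sum_le_sum_abs _ _
    _ ≤ ∑ j ∈ Finset.range (M + 1), (|a j| + |b j|) := by
        refine Finset.sum_le_sum fun j _ => ?_
        refine (abs_add_le _ _).trans (add_le_add ?_ ?_)
        · rw [abs_mul]
          exact mul_le_of_le_one_right (abs_nonneg _) (Real.abs_cos_le_one _)
        · rw [abs_mul]
          exact mul_le_of_le_one_right (abs_nonneg _) (Real.abs_sin_le_one _)

lemma deriv_eq_sum {M : ℕ} (hM : 1 ≤ M) (a b : ℕ → ℝ) (x : ℝ) :
    deriv (fun x => ∑ j ∈ Finset.range (M + 1), (a j * Real.cos (j * x) + b j * Real.sin (j * x))) x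
      = ∑ k ∈ Finset.range (2 * M), lam M k *
          ∑ j ∈ Finset.range (M + 1), (a j * Real.cos (j * (x + node M k)) + b j * Real.sin (j * (x + node M k))) := by
  rw [(hasDerivAt_trigPoly a b M x).deriv]
  have hsplit : ∀ k, ∀ j,
      lam M k * (a j * Real.cos ((j:ℝ) * (x + node M k)) + b j * Real.sin ((j:ℝ) * (x + node M k)))
        = (a j * Real.cos ((j:ℝ) * x) + b j * Real.sin ((j:ℝ) * x)) * (lam M k * Real.cos ((j:ℝ) * node M k))
          + (b j * Real.cos ((j:ℝ) * x) - a j * Real.sin ((j:ℝ) * x)) * (lam M k * Real.sin ((j:ℝ) * node M k)) := by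
    intro k j
    have e : (j:ℝ) * (x + node M k) = (j:ℝ) * x + (j:ℝ) * node M k := by ring
    rw [e, Real.cos_add, Real.sin_add]
    ring
  simp only [Finset.mul_sum]
  rw [Finset.sum_comm]
  refine Finset.sum_congr rfl fun j hj => ?_
  rw [Finset.mem_range] at hj
  symm
  calc ∑ k ∈ Finset.range (2 * M),
        lam M k * (a j * Real.cos ((j:ℝ) * (x + node M k)) + b j * Real.sin ((j:ℝ) * (x + node M k)))
      = ∑ k ∈ Finset.range (2 * M),
          ((a j * Real.cos ((j:ℝ) * x) + b j * Real.sin ((j:ℝ) * x)) * (lam M k * Real.cos ((j:ℝ) * node M k))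
            + (b j * Real.cos ((j:ℝ) * x) - a j * Real.sin ((j:ℝ) * x)) * (lam M k * Real.sin ((j:ℝ) * node M k))) :=
        Finset.sum_congr rfl fun k _ => hsplit k j
    _ = (a j * Real.cos ((j:ℝ) * x) + b j * Real.sin ((j:ℝ) * x))
          * (∑ k ∈ Finset.range (2 * M), lam M k * Real.cos ((j:ℝ) * node M k))
        + (b j * Real.cos ((j:ℝ) * x) - a j * Real.sin ((j:ℝ) * x))
          * (∑ k ∈ Finset.range (2 * M), lam M k * Real.sin ((j:ℝ) * node M k)) := by
        rw [Finset.sum_add_distrib, ← Finset.mul_sum, ← Finset.mul_sum]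
    _ = (j:ℝ) * b j * Real.cos ((j:ℝ) * x) + (-((j:ℝ) * a j)) * Real.sin ((j:ℝ) * x) := by
        rw [sum_lam_cos j hM, sum_lam_sin hM (by omega)]
        ring

lemma sum_abs_lam {M : ℕ} (hM : 1 ≤ M) :
    ∑ k ∈ Finset.range (2 * M), |lam M k| = M := by
  have h : ∀ k ∈ Finset.range (2 * M),
      |lam M k| = lam M k * Real.sin ((M:ℝ) * node M k) := by
    intro k _
    have h1 := one_sub_cos_node_pos (k := k) hM
    have hMpos : (0:ℝ) < M := by positivity
    rw [lam, abs_div, abs_of_pos (by positivity : (0:ℝ) < 2 * M * (1 - Real.cos (node M k))),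
      abs_sin_M_node hM]
    have h2 := sin_M_node_sq (k := k) hM
    field_simp
    linear_combination -h2
  rw [Finset.sum_congr rfl h]
  exact sum_lam_sin hM le_rfl

lemma bernstein_step {M : ℕ} {T : ℝ → ℝ} (hT : IsTrigPoly M T) (x : ℝ) :
    |deriv T x| ≤ (M : ℝ) * ⨆ y : ℝ, |T y| := by
  have hbdd := trigPoly_bddAbove hT
  rcases Nat.eq_zero_or_pos M with hM | hM
  · subst hM
    obtain ⟨a, b, rfl⟩ := hT
    have hconst : (fun x : ℝ => ∑ j ∈ Finset.range (0 + 1), (a j * Real.cos (j * x) + b j * Real.sin (j * x)))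
        = fun _ : ℝ => a 0 := by
      funext y; simp
    rw [hconst]
    simp
  · obtain ⟨a, b, rfl⟩ := hT
    set T : ℝ → ℝ := fun x => ∑ j ∈ Finset.range (M + 1), (a j * Real.cos (j * x) + b j * Real.sin (j * x))
      with hTdef
    have hform : deriv T x = ∑ k ∈ Finset.range (2 * M), lam M k * T (x + node M k) := by
      rw [hTdef]
      exact deriv_eq_sum hM a b x
    rw [hform]
    calc |∑ k ∈ Finset.range (2 * M), lam M k * T (x + node M k)|
        ≤ ∑ k ∈ Finset.range (2 * M), |lam M k * T (x + node M k)| :=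
          Finset.abs_sum_le_sum_abs _ _
      _ ≤ ∑ k ∈ Finset.range (2 * M), |lam M k| * ⨆ y : ℝ, |T y| := by
          refine Finset.sum_le_sum fun k _ => ?_
          rw [abs_mul]
          exact mul_le_mul_of_nonneg_left (le_ciSup hbdd (x + node M k)) (abs_nonneg _)
      _ = (∑ k ∈ Finset.range (2 * M), |lam M k|) * ⨆ y : ℝ, |T y| := by
          rw [Finset.sum_mul]
      _ = (M : ℝ) * ⨆ y : ℝ, |T y| := by rw [sum_abs_lam hM]

lemma bern_aux (M s : ℕ) : ∀ T : ℝ → ℝ, IsTrigPoly M T →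
    ∀ x : ℝ, |iteratedDeriv s T x| ≤ (M : ℝ) ^ s * ⨆ y : ℝ, |T y| := by
  induction s with
  | zero =>
    intro T hT x
    simpa [iteratedDeriv_zero] using le_ciSup (trigPoly_bddAbove hT) x
  | succ s ih =>
    intro T hT x
    rw [iteratedDeriv_succ']
    have h1 := ih (deriv T) (isTrigPoly_deriv hT) x
    have hsup : (⨆ y : ℝ, |deriv T y|) ≤ (M : ℝ) * ⨆ y : ℝ, |T y| :=
      ciSup_le fun y => bernstein_step hT y
    calc |iteratedDeriv s (deriv T) x|
        ≤ (M : ℝ) ^ s * ⨆ y : ℝ, |deriv T y| := h1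
      _ ≤ (M : ℝ) ^ s * ((M : ℝ) * ⨆ y : ℝ, |T y|) :=
          mul_le_mul_of_nonneg_left hsup (by positivity)
      _ = (M : ℝ) ^ (s + 1) * ⨆ y : ℝ, |T y| := by ring

/-- Bernstein's inequality: `‖T^{(s)}‖_∞ ≤ M^s ‖T‖_∞` for a trigonometric polynomial of
degree at most `M`. -/
theorem bernstein_inequality (M s : ℕ) (T : ℝ → ℝ) (hT : IsTrigPoly M T) :
    ∀ x : ℝ, |iteratedDeriv s T x| ≤ (M : ℝ) ^ s * ⨆ y : ℝ, |T y| :=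
  bern_aux M s T hT
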